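/- Violation of a mutual-information Landauer bound: there exist finite-dimensional systems S, M, R, a state ρ_{SM} with I(S:M) > 0, a full-rank reservoir state ρ_R equal to ρ_S = tr_M ρ_{SM} (thermal for H = −log ρ_R at β = 1), and a unitary U_SR (the swap of S and R) such that the process ρ'_{SRM} = (U_SR ⊗ 1_M)(ρ_{SM} ⊗ ρ_R)(U_SR ⊗ 1_M)† satisfies ΔI := I(S:M) − I(S':M') = I(S:M) > 0 while β·ΔQ = tr[H(ρ'_R − ρ_R)] = 0; hence β·ΔQ ≥ ΔI fails in general. -/

import Mathlib

open scoped Kronecker ComplexOrder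
open Matrix

noncomputable def matfun {n : Type*} [Fintype n] [DecidableEq n] (f : ℝ → ℝ)
    (A : Matrix n n ℂ) : Matrix n n ℂ :=
  if h : A.IsHermitian then
    (h.eigenvectorUnitary : Matrix n n ℂ) * Matrix.diagonal (fun i => (f (h.eigenvalues i) : ℂ)) *
      (star (h.eigenvectorUnitary : Matrix n n ℂ))
  else 0

noncomputable def mlog {n : Type*} [Fintype n] [DecidableEq n] (A : Matrix n n ℂ) : Matrix n n ℂ :=
  matfun Real.log A

noncomputable def mexp {n : Type*} [Fintype n] [DecidableEq n] (β : ℝ) (H : Matrix n n ℂ) : Matrix n n ℂ :=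
  matfun (fun x => Real.exp (-β * x)) H

noncomputable def gibbs {n : Type*} [Fintype n] [DecidableEq n] (β : ℝ) (H : Matrix n n ℂ) : Matrix n n ℂ :=
  ((mexp β H).trace)⁻¹ • mexp β H

noncomputable def entropy {n : Type*} [Fintype n] [DecidableEq n] (ρ : Matrix n n ℂ) : ℝ :=
  -((ρ * mlog ρ).trace).re

noncomputable def relEnt {n : Type*} [Fintype n] [DecidableEq n] (σ ρ : Matrix n n ℂ) : ℝ :=
  ((σ * (mlog σ - mlog ρ)).trace).re

def IsState {n : Type*} [Fintype n] (ρ : Matrix n n ℂ) : Prop := ρ.PosSemidef ∧ ρ.trace = 1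

noncomputable def trR {a b : Type*} [Fintype a] [Fintype b]
    (ρ : Matrix (a × b) (a × b) ℂ) : Matrix a a ℂ :=
  Matrix.of fun i j => ∑ k, ρ (i, k) (j, k)

noncomputable def trL {a b : Type*} [Fintype a] [Fintype b]
    (ρ : Matrix (a × b) (a × b) ℂ) : Matrix b b ℂ :=
  Matrix.of fun i j => ∑ k, ρ (k, i) (k, j)

noncomputable def mutInfo {a b : Type*} [Fintype a] [Fintype b] [DecidableEq a] [DecidableEq b]
    (ρ : Matrix (a × b) (a × b) ℂ) : ℝ :=
  entropy (trR ρ) + entropy (trL ρ) - entropy ρ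



section Lemmas
variable {n : Type*} [Fintype n] [DecidableEq n]

lemma conj_trace (V D E : Matrix n n ℂ) (hU : star V * V = 1) :
    ((V * D * star V) * (V * E * star V)).trace = (D * E).trace := by
  have h1 : (V * D * star V) * (V * E * star V) = V * (D * E) * star V := by
    rw [Matrix.mul_assoc (V*D) (star V) _, ← Matrix.mul_assoc (star V) _ _,
      ← Matrix.mul_assoc (star V) V _, hU, Matrix.one_mul]
    noncomm_ring
  rw [h1, Matrix.trace_mul_cycle, ← Matrix.mul_assoc, hU, Matrix.one_mul]

lemma trace_mul_matfun (f : ℝ → ℝ) {A : Matrix n n ℂ} (hA : A.IsHermitian) :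
    (A * matfun f A).trace = ∑ i, ((hA.eigenvalues i : ℂ) * (f (hA.eigenvalues i) : ℂ)) := by
  have hUV : star (hA.eigenvectorUnitary : Matrix n n ℂ) * (hA.eigenvectorUnitary : Matrix n n ℂ) = 1 :=
    hA.eigenvectorUnitary.2.1
  calc (A * matfun f A).trace
      = (((hA.eigenvectorUnitary : Matrix n n ℂ) * Matrix.diagonal (RCLike.ofReal ∘ hA.eigenvalues)
          * star (hA.eigenvectorUnitary : Matrix n n ℂ)) * matfun f A).trace := by
        have hs := hA.spectral_theorem
        rw [Unitary.conjStarAlgAut_apply] at hs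
        rw [← hs]
    _ = (Matrix.diagonal (RCLike.ofReal ∘ hA.eigenvalues)
          * Matrix.diagonal (fun i => (f (hA.eigenvalues i) : ℂ))).trace := by
        rw [matfun, dif_pos hA]; exact conj_trace _ _ _ hUV
    _ = ∑ i, ((hA.eigenvalues i : ℂ) * (f (hA.eigenvalues i) : ℂ)) := by
        rw [Matrix.diagonal_mul_diagonal, Matrix.trace_diagonal]
        simp

lemma trace_eq_sum_eig {A : Matrix n n ℂ} (hA : A.IsHermitian) :
    A.trace = ∑ i, (hA.eigenvalues i : ℂ) := by
  have hUV : star (hA.eigenvectorUnitary : Matrix n n ℂ) * (hA.eigenvectorUnitary : Matrix n n ℂ) = 1 :=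
    hA.eigenvectorUnitary.2.1
  conv_lhs => rw [hA.spectral_theorem]
  rw [Unitary.conjStarAlgAut_apply]
  rw [Matrix.trace_mul_cycle, hUV, Matrix.one_mul, Matrix.trace_diagonal]
  simp

lemma eig_mem {d : n → ℝ} (hA : (Matrix.diagonal (fun i => (d i : ℂ))).IsHermitian) (i : n) :
    ∃ j, d j = hA.eigenvalues i := by
  have h1 := hA.eigenvalues_mem_spectrum_real i
  have h2 : (algebraMap ℝ ℂ) (hA.eigenvalues i) ∈ spectrum ℂ (Matrix.diagonal (fun i => (d i : ℂ))) :=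
    (spectrum.algebraMap_mem_iff ℂ).mpr h1
  rw [spectrum_diagonal] at h2
  obtain ⟨j, hj⟩ := h2
  refine ⟨j, ?_⟩
  have h3 : ((d j : ℂ)) = ((hA.eigenvalues i : ℂ)) := by simpa using hj
  exact_mod_cast h3

lemma isHermitian_diag_real (d : n → ℝ) : (Matrix.diagonal (fun i => (d i : ℂ))).IsHermitian := by
  ext i j
  simp only [Matrix.conjTranspose_apply, Matrix.diagonal_apply]
  by_cases h : i = j <;> simp [h, eq_comm, Complex.conj_ofReal]

lemma entropy_special (d : n → ℝ) (c : ℝ) (hd : ∀ j, d j = 0 ∨ d j = c) :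
    entropy (Matrix.diagonal (fun i => (d i : ℂ))) = -((∑ j, d j) * Real.log c) := by
  have hA := isHermitian_diag_real d
  rw [entropy, mlog, trace_mul_matfun Real.log hA]
  have h1 : ∀ i, hA.eigenvalues i * Real.log (hA.eigenvalues i)
      = hA.eigenvalues i * Real.log c := by
    intro i
    obtain ⟨j, hj⟩ := eig_mem hA i
    rcases hd j with h | h <;> rw [← hj, h] <;> simp
  have h2 : ∑ i, hA.eigenvalues i = ∑ j, d j := by
    have h := trace_eq_sum_eig hA
    rw [Matrix.trace_diagonal] at h
    have h' := congrArg Complex.re h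
    simpa using h'.symm
  rw [Complex.re_sum]
  simp only [Complex.mul_re, Complex.ofReal_re, Complex.ofReal_im, mul_zero, sub_zero]
  calc -(∑ i, hA.eigenvalues i * Real.log (hA.eigenvalues i))
      = -(∑ i, hA.eigenvalues i * Real.log c) := by rw [Finset.sum_congr rfl fun i _ => h1 i]
    _ = -((∑ j, d j) * Real.log c) := by rw [← Finset.sum_mul, h2]

end Lemmas
section Main

noncomputable def dfun : Fin 2 × Fin 2 → ℝ := fun p => if p.1 = p.2 then 1/2 else 0

theorem mutual_info_landauer_violation :
    ∃ (dS dM : ℕ) (ρSM : Matrix (Fin dS × Fin dM) (Fin dS × Fin dM) ℂ),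
      IsState ρSM ∧ (trR ρSM).PosDef ∧
      let ρR : Matrix (Fin dS) (Fin dS) ℂ := trR ρSM
      let H := -(mlog ρR)
      let U : Matrix ((Fin dS × Fin dM) × Fin dS) ((Fin dS × Fin dM) × Fin dS) ℂ :=
        Matrix.of fun p q =>
          if p.1.1 = q.2 ∧ p.2 = q.1.1 ∧ p.1.2 = q.1.2 then (1 : ℂ) else 0
      let ρ' := U * (ρSM ⊗ₖ ρR) * star U
      0 < mutInfo ρSM ∧
        mutInfo (trR ρ') = 0 ∧
        mutInfo ρSM - mutInfo (trR ρ') = mutInfo ρSM ∧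
        (1 : ℝ) * ((H * (trL ρ' - ρR)).trace).re = 0 := by
  set ρSM : Matrix (Fin 2 × Fin 2) (Fin 2 × Fin 2) ℂ :=
    Matrix.diagonal (fun p => ((dfun p : ℝ) : ℂ)) with hρSM
  -- marginals of ρSM
  have hS : trR ρSM = Matrix.diagonal (fun _ : Fin 2 => (((1:ℝ)/2 : ℝ) : ℂ)) := by
    ext i j
    fin_cases i <;> fin_cases j <;>
      simp [trR, hρSM, dfun, Matrix.diagonal_apply, Fin.sum_univ_two] <;> norm_num
  have hM : trL ρSM = Matrix.diagonal (fun _ : Fin 2 => (((1:ℝ)/2 : ℝ) : ℂ)) := by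
    ext i j
    fin_cases i <;> fin_cases j <;>
      simp [trL, hρSM, dfun, Matrix.diagonal_apply, Fin.sum_univ_two] <;> norm_num
  -- entropies
  have e2 : entropy (Matrix.diagonal (fun _ : Fin 2 => (((1:ℝ)/2 : ℝ) : ℂ))) = Real.log 2 := by
    rw [entropy_special (fun _ : Fin 2 => (1:ℝ)/2) ((1:ℝ)/2) (fun _ => Or.inr rfl)]
    have hs : ∑ _j : Fin 2, (1:ℝ)/2 = 1 := by rw [Fin.sum_univ_two]; norm_num
    rw [hs, one_mul, one_div, Real.log_inv, neg_neg]
  have e4 : entropy (Matrix.diagonal (fun _ : Fin 2 × Fin 2 => (((1:ℝ)/4 : ℝ) : ℂ)))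
      = 2 * Real.log 2 := by
    rw [entropy_special (fun _ : Fin 2 × Fin 2 => (1:ℝ)/4) ((1:ℝ)/4) (fun _ => Or.inr rfl)]
    have hs : ∑ _j : Fin 2 × Fin 2, (1:ℝ)/4 = 1 := by
      rw [Fintype.sum_prod_type]
      simp only [Fin.sum_univ_two]
      norm_num
    rw [hs, one_mul, show ((1:ℝ)/4) = ((2:ℝ)^2)⁻¹ by norm_num, Real.log_inv, Real.log_pow, neg_neg]
    push_cast
    ring
  have eSM : entropy ρSM = Real.log 2 := by
    rw [hρSM, entropy_special dfun ((1:ℝ)/2) ?side]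
    case side =>
      intro j
      by_cases h : j.1 = j.2 <;> simp [dfun, h]
    have hsum : ∑ j, dfun j = 1 := by
      rw [Fintype.sum_prod_type]
      simp only [dfun, Fin.sum_univ_two]
      norm_num
    rw [hsum, one_mul, one_div, Real.log_inv, neg_neg]
  have hmi : mutInfo ρSM = Real.log 2 := by
    rw [mutInfo, hS, hM, e2, eSM]
    ring
  refine ⟨2, 2, ρSM, ⟨?_, ?_⟩, ?_, ?_⟩
  · refine Matrix.posSemidef_diagonal_iff.mpr fun i => Complex.zero_le_real.mpr ?_
    by_cases h : i.1 = i.2 <;> simp [dfun, h] <;> norm_num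
  · rw [hρSM, Matrix.trace_diagonal, Fintype.sum_prod_type]
    simp [dfun, Fin.sum_univ_two]
    norm_num
  · rw [hS]
    refine Matrix.posDef_diagonal_iff.mpr fun i => Complex.zero_lt_real.mpr (by norm_num)
  intro ρR H U ρ'
  have hρR : ρR = Matrix.diagonal (fun _ : Fin 2 => (((1:ℝ)/2 : ℝ) : ℂ)) := hS
  -- permutation structure of U
  have hU : ∀ p q : (Fin 2 × Fin 2) × Fin 2,
      U p q = if q = ((p.2, p.1.2), p.1.1) then (1:ℂ) else 0 := by
    intro p q
    show (if p.1.1 = q.2 ∧ p.2 = q.1.1 ∧ p.1.2 = q.1.2 then (1:ℂ) else 0) = _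
    refine if_congr ?_ rfl rfl
    constructor
    · rintro ⟨h1, h2, h3⟩
      obtain ⟨⟨a, b⟩, c⟩ := q
      simp_all [Prod.ext_iff]
    · rintro rfl
      exact ⟨rfl, rfl, rfl⟩
  have hρ'app : ∀ p q : (Fin 2 × Fin 2) × Fin 2,
      ρ' p q = (ρSM ⊗ₖ ρR) ((p.2, p.1.2), p.1.1) ((q.2, q.1.2), q.1.1) := by
    intro p q
    show (U * (ρSM ⊗ₖ ρR) * star U) p q = _
    rw [Matrix.mul_apply]
    have : ∀ b, (U * (ρSM ⊗ₖ ρR)) p b = (ρSM ⊗ₖ ρR) ((p.2, p.1.2), p.1.1) b := by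
      intro b
      rw [Matrix.mul_apply]
      simp [hU, ite_mul, one_mul, zero_mul]
    simp only [this, Matrix.star_apply, hU]
    simp [apply_ite (starRingEnd ℂ), mul_ite, mul_one, mul_zero]
  -- R marginal after swap equals ρR
  -- R marginal after swap equals ρR
  have hR' : trL ρ' = ρR := by
    ext r r'
    show ∑ p : Fin 2 × Fin 2, ρ' (p, r) (p, r') = ρR r r'
    simp only [hρ'app, hρR]
    fin_cases r <;> fin_cases r' <;>
      simp [Matrix.kroneckerMap_apply, hρSM, dfun, Matrix.diagonal_apply,
        Fintype.sum_prod_type, Fin.sum_univ_two, Prod.mk.injEq] <;> norm_num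
  -- SM marginal after swap is maximally mixed
  have hSM' : trR ρ' = Matrix.diagonal (fun _ : Fin 2 × Fin 2 => (((1:ℝ)/4 : ℝ) : ℂ)) := by
    ext p q
    show ∑ k : Fin 2, ρ' (p, k) (q, k) = _
    simp only [hρ'app, hρR]
    fin_cases p <;> fin_cases q <;>
      simp [Matrix.kroneckerMap_apply, hρSM, dfun, Matrix.diagonal_apply,
        Fin.sum_univ_two, Prod.mk.injEq] <;> norm_num [Prod.ext_iff]
  have hS4 : trR (Matrix.diagonal (fun _ : Fin 2 × Fin 2 => (((1:ℝ)/4 : ℝ) : ℂ)))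
      = Matrix.diagonal (fun _ : Fin 2 => (((1:ℝ)/2 : ℝ) : ℂ)) := by
    ext i j
    fin_cases i <;> fin_cases j <;>
      simp [trR, Matrix.of_apply, Matrix.diagonal_apply, Fin.sum_univ_two, Prod.mk.injEq] <;>
      norm_num
  have hL4 : trL (Matrix.diagonal (fun _ : Fin 2 × Fin 2 => (((1:ℝ)/4 : ℝ) : ℂ)))
      = Matrix.diagonal (fun _ : Fin 2 => (((1:ℝ)/2 : ℝ) : ℂ)) := by
    ext i j
    fin_cases i <;> fin_cases j <;>
      simp [trL, Matrix.of_apply, Matrix.diagonal_apply, Fin.sum_univ_two, Prod.mk.injEq] <;>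
      norm_num
  have h0 : mutInfo (trR ρ') = 0 := by
    rw [hSM', mutInfo, hS4, hL4, e2, e4]
    ring
  refine ⟨by rw [hmi]; exact Real.log_pos one_lt_two, h0, by rw [h0, sub_zero], ?_⟩
  rw [hR', sub_self, Matrix.mul_zero, Matrix.trace_zero]
  simp

end Main
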